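/- Under the assumptions on H, ℓ, s and u in the context, suppose s is constant on an open interval (a, b) ⊆ (0, ℓ). Then for every t ∈ (a, b), the function t ↦ u'(t)/√(1 + u'(t)²), where u'(t) = (s(t) − H·t)/√(1 − (s(t) − H·t)²), is differentiable at t with derivative equal to −H; that is, u solves the constant mean curvature equation −(u'/√(1 + (u')²))' = H on (a, b). -/

import Mathlib

open Set intervalIntegral

/-- Algebraic identity: for `|x| < 1`, `(x/√(1-x²))/√(1+(x/√(1-x²))²) = x`. -/
lemma aux_simplify (x : ℝ) (hx : |x| < 1) :
    (x / Real.sqrt (1 - x ^ 2)) /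
      Real.sqrt (1 + (x / Real.sqrt (1 - x ^ 2)) ^ 2) = x := by
  have hx2 : x ^ 2 < 1 := by
    have := sq_abs x
    nlinarith [abs_nonneg x]
  have hpos : 0 < 1 - x ^ 2 := by linarith
  set y := Real.sqrt (1 - x ^ 2) with hy
  have hypos : 0 < y := Real.sqrt_pos.mpr hpos
  have hysq : y ^ 2 = 1 - x ^ 2 := Real.sq_sqrt hpos.le
  have h1 : 1 + (x / y) ^ 2 = 1 / y ^ 2 := by
    field_simp
    rw [hysq]; ring
  rw [h1]
  have : Real.sqrt (1 / y ^ 2) = 1 / y := by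
    rw [one_div, Real.sqrt_inv, Real.sqrt_sq hypos.le, one_div]
  rw [this]
  field_simp

/-- **Property e) of Lemma 6.6 of the paper.** On any open interval `(a, b) ⊆ (0, ℓ)`
where the staircase `s` is constant, the profile `u` solves the constant mean
curvature equation `−(u'/√(1+u'²))' = H`, where
`u'(t) = (s(t)−Ht)/√(1−(s(t)−Ht)²)`. -/
theorem cantor_profile_cmc_on_flat_parts
    (H ℓ : ℝ) (hH : 0 < H) (hℓ : 0 < ℓ) (hHℓ : H * ℓ < 2)
    (s : ℝ → ℝ) (hscont : Continuous s) (hsmono : Monotone s)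
    (hs0 : s 0 = 0) (hsℓ : s ℓ = H * ℓ)
    (hsym : ∀ t ∈ Set.Icc (0 : ℝ) ℓ, s t + s (ℓ - t) = H * ℓ)
    (hgt : ∀ t ∈ Set.Ioo (0 : ℝ) (ℓ / 2), H * t < s t)
    (hbd : ∀ t ∈ Set.Icc (0 : ℝ) ℓ, |s t - H * t| ≤ H * ℓ / 2)
    (u : ℝ → ℝ)
    (hu : ∀ t, u t = ∫ r in (0 : ℝ)..t,
      (s r - H * r) / Real.sqrt (1 - (s r - H * r) ^ 2))
    (a b : ℝ) (hab : a < b) (hsub : Set.Ioo a b ⊆ Set.Ioo (0 : ℝ) ℓ)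
    (hconst : ∀ x ∈ Set.Ioo a b, ∀ y ∈ Set.Ioo a b, s x = s y) :
    ∀ t ∈ Set.Ioo a b,
      HasDerivAt
        (fun r => ((s r - H * r) / Real.sqrt (1 - (s r - H * r) ^ 2)) /
          Real.sqrt (1 + ((s r - H * r) / Real.sqrt (1 - (s r - H * r) ^ 2)) ^ 2))
        (-H) t := by
  intro t ht
  -- the function agrees with `r ↦ s t - H * r` on a neighborhood of `t`
  have hkey : ∀ r ∈ Set.Ioo a b,
      ((s r - H * r) / Real.sqrt (1 - (s r - H * r) ^ 2)) /
        Real.sqrt (1 + ((s r - H * r) / Real.sqrt (1 - (s r - H * r) ^ 2)) ^ 2)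
        = s t - H * r := by
    intro r hr
    have hrℓ : r ∈ Set.Ioo (0 : ℝ) ℓ := hsub hr
    have hlt : |s r - H * r| < 1 := by
      have h1 := hbd r (Set.mem_Icc.mpr ⟨hrℓ.1.le, hrℓ.2.le⟩)
      nlinarith [hH, hℓ, abs_nonneg (s r - H * r)]
    rw [aux_simplify _ hlt, hconst r hr t ht]
  have hderiv : HasDerivAt (fun r => s t - H * r) (-H) t := by
    have : HasDerivAt (fun r : ℝ => H * r) H t := by
      simpa using (hasDerivAt_id t).const_mul H
    simpa [Pi.sub_def] using (hasDerivAt_const t (s t)).sub this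
  refine hderiv.congr_of_eventuallyEq ?_
  filter_upwards [Ioo_mem_nhds ht.1 ht.2] with r hr
  exact hkey r hr
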